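/- Let G be the quaternion group of order 8 (Mathlib's QuaternionGroup 2), let z = x² be its unique central element of order 2, and let C be a cyclic group of order 4 with generator c. Let D' = {(g₁,g₂) ∈ G × G : g₁g₂⁻¹ ∈ {1, z}} (a subgroup of G × G), and let δ' : D' → C be the homomorphism with δ'(g₁,g₂) = 1 if g₁ = g₂ and δ'(g₁,g₂) = c² if g₁ ≠ g₂. Then there do NOT exist a finite group K with |K| < 8, subgroups U ≤ G × K and V ≤ K × G with U * V = D', and homomorphisms μ : U → C and ν : V → C such that μ(g₁,h)·ν(h,g₂) = δ'(g₁,g₂) for all g₁, g₂ ∈ G and h ∈ K with (g₁,h) ∈ U and (h,g₂) ∈ V. -/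

import Mathlib

set_option maxRecDepth 10000

open QuaternionGroup
open scoped commutatorElement

/-- The star product `M * N` of subgroups `M ≤ G × H` and `N ≤ H × K`:
`{(g,k) | ∃ h, (g,h) ∈ M ∧ (h,k) ∈ N}`. -/
def starProd {G H K : Type*} [Group G] [Group H] [Group K]
    (M : Subgroup (G × H)) (N : Subgroup (H × K)) : Subgroup (G × K) where
  carrier := {x | ∃ h : H, (x.1, h) ∈ M ∧ (h, x.2) ∈ N}
  one_mem' := ⟨1, M.one_mem, N.one_mem⟩
  mul_mem' := by
    rintro ⟨g, k⟩ ⟨g', k'⟩ ⟨h, hM, hN⟩ ⟨h', hM', hN'⟩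
    exact ⟨h * h', M.mul_mem hM hM', N.mul_mem hN hN'⟩
  inv_mem' := by
    rintro ⟨g, k⟩ ⟨h, hM, hN⟩
    exact ⟨h⁻¹, M.inv_mem hM, N.inv_mem hN⟩

private lemma Dq_mul :
    ∀ x y : QuaternionGroup 2 × QuaternionGroup 2,
      (x.1 * x.2⁻¹ = 1 ∨ x.1 * x.2⁻¹ = a 2) →
      (y.1 * y.2⁻¹ = 1 ∨ y.1 * y.2⁻¹ = a 2) →
      ((x * y).1 * (x * y).2⁻¹ = 1 ∨ (x * y).1 * (x * y).2⁻¹ = a 2) := by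
  decide

private lemma Dq_inv :
    ∀ x : QuaternionGroup 2 × QuaternionGroup 2,
      (x.1 * x.2⁻¹ = 1 ∨ x.1 * x.2⁻¹ = a 2) →
      (x⁻¹.1 * x⁻¹.2⁻¹ = 1 ∨ x⁻¹.1 * x⁻¹.2⁻¹ = a 2) := by
  decide

/-- The subgroup `D' = {(g₁,g₂) | g₁g₂⁻¹ ∈ {1, x²}}` of `Q₈ × Q₈`, where
`x² = a 2` is the central element of order 2. -/
def Dq : Subgroup (QuaternionGroup 2 × QuaternionGroup 2) where
  carrier := {x | x.1 * x.2⁻¹ = 1 ∨ x.1 * x.2⁻¹ = a 2}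
  one_mem' := by decide
  mul_mem' := fun hx hy => Dq_mul _ _ hx hy
  inv_mem' := fun hx => Dq_inv _ hx

private lemma comm_odd {K : Type} [Group K] [Fintype K] (hK : Fintype.card K < 8)
    (x y : K) : ¬ (2 ∣ orderOf ⁅x, y⁆) := by
  intro h2
  have hdvd : orderOf ⁅x, y⁆ ∣ Fintype.card K := orderOf_dvd_card
  have h2K : 2 ∣ Fintype.card K := h2.trans hdvd
  have hpos : 0 < Fintype.card K := Fintype.card_pos
  have habelian : ∀ (h : ∀ a b : K, a * b = b * a), False := by
    intro h
    have h1 : ⁅x, y⁆ = 1 := commutatorElement_eq_one_iff_commute.mpr (h x y)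
    rw [h1, orderOf_one] at h2
    omega
  have hcases : Fintype.card K = 2 ∨ Fintype.card K = 4 ∨ Fintype.card K = 6 := by omega
  haveI : Fact (Nat.Prime 2) := ⟨by norm_num⟩
  rcases hcases with h | h | h
  · haveI : IsCyclic K := isCyclic_of_prime_card (p := 2)
      (by rw [Nat.card_eq_fintype_card, h])
    letI := IsCyclic.commGroup (α := K)
    exact habelian fun a b => mul_comm a b
  · exact habelian (IsPGroup.commutative_of_card_eq_prime_sq
      (p := 2) (by rw [Nat.card_eq_fintype_card, h]; norm_num))
  · haveI : Fact (Nat.Prime 3) := ⟨by norm_num⟩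
    obtain ⟨t, ht⟩ := exists_prime_orderOf_dvd_card 3 (by rw [h]; norm_num)
    set P := Subgroup.zpowers t with hP
    have hcardP : Nat.card P = 3 := by rw [hP, Nat.card_zpowers, ht]
    have hindex : P.index = 2 := by
      have hmi := Subgroup.card_mul_index P
      rw [hcardP, Nat.card_eq_fintype_card, h] at hmi
      omega
    have hmem : ⁅x, y⁆ ∈ P := by
      rw [commutatorElement_def]
      rw [Subgroup.mul_mem_iff_of_index_two hindex,
        Subgroup.mul_mem_iff_of_index_two hindex,
        Subgroup.mul_mem_iff_of_index_two hindex, P.inv_mem_iff, P.inv_mem_iff]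
      tauto
    have h3 : orderOf ⁅x, y⁆ ∣ 3 := hcardP ▸ P.orderOf_dvd_natCard hmem
    have : (2 : ℕ) ∣ 3 := h2.trans h3
    norm_num at this

/-- The element `(g₁,g₂) ↦ (1 if g₁ = g₂ else c²)` of `kB_C¹(Q₈ × Q₈)` does not
factor through any group of order `< 8` compatibly with characters: the
counterexample idempotent has nonzero class in `\hat{kB_C^1}(Q₈)`. -/
theorem no_factorization_through_smaller_group
    {C : Type*} [Group C] (c : C) (hc : orderOf c = 4)
    (hgen : ∀ z : C, z ∈ Subgroup.zpowers c)
    (δ' : Dq →* C)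
    (hδ' : ∀ x : Dq,
      δ' x = if (x : QuaternionGroup 2 × QuaternionGroup 2).1
               = (x : QuaternionGroup 2 × QuaternionGroup 2).2 then 1 else c ^ 2) :
    ¬ ∃ (K : Type) (_ : Group K) (_ : Fintype K), Fintype.card K < 8 ∧
      ∃ (U : Subgroup (QuaternionGroup 2 × K)) (V : Subgroup (K × QuaternionGroup 2)),
        starProd U V = Dq ∧
        ∃ (μ : U →* C) (ν : V →* C),
          ∀ (g₁ g₂ : QuaternionGroup 2) (h : K)
            (hU : (g₁, h) ∈ U) (hV : (h, g₂) ∈ V) (hD : (g₁, g₂) ∈ Dq),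
            μ ⟨(g₁, h), hU⟩ * ν ⟨(h, g₂), hV⟩ = δ' ⟨(g₁, g₂), hD⟩ := by
  rintro ⟨K, _, _, hK, U, V, hUV, μ, ν, hcompat⟩
  classical
  have hcomm : ∀ u v : C, u * v = v * u := by
    intro u v
    obtain ⟨m, hm⟩ := hgen u
    obtain ⟨k, hk⟩ := hgen v
    rw [← hm, ← hk, ← zpow_add, ← zpow_add, add_comm]
  have hz1 : (a 2 : QuaternionGroup 2) ≠ 1 := by decide
  -- Step A
  have hA : ∀ g : QuaternionGroup 2, ∃ h : K, (g, h) ∈ U ∧ (h, g) ∈ V := by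
    intro g
    have hg : ((g, g) : QuaternionGroup 2 × QuaternionGroup 2) ∈ Dq :=
      Or.inl (mul_inv_cancel g)
    rw [← hUV] at hg
    exact hg
  -- the central element lies in both "kernels"
  have hQ8 : ∀ g : QuaternionGroup 2, g ≠ 1 → (g = a 2 ∨ g * g = a 2) := by decide
  have cardQ : Nat.card (QuaternionGroup 2) = 8 := by
    rw [Nat.card_eq_fintype_card, QuaternionGroup.card]
  have hBU : ((a 2 : QuaternionGroup 2), (1 : K)) ∈ U := by
    by_contra hcon
    have hker : ∀ g : QuaternionGroup 2, (g, (1 : K)) ∈ U → g = 1 := by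
      intro g hg
      by_contra hne
      rcases hQ8 g hne with h | h
      · exact hcon (h ▸ hg)
      · have hsq := U.mul_mem hg hg
        have heq : ((g, (1 : K)) * (g, 1)) = ((a 2 : QuaternionGroup 2), (1 : K)) := by
          simp [Prod.ext_iff, h]
        rw [heq] at hsq
        exact hcon hsq
    have hinj : Function.Injective (fun u : U => (u : QuaternionGroup 2 × K).2) := by
      intro u v huv
      have huv' : (u : QuaternionGroup 2 × K).2 = (v : QuaternionGroup 2 × K).2 := huv
      have hmem := U.mul_mem u.2 (U.inv_mem v.2)
      have h2 : ((u : QuaternionGroup 2 × K) * (v : QuaternionGroup 2 × K)⁻¹).2 = 1 := by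
        simp only [Prod.snd_mul, Prod.snd_inv]
        rw [huv', mul_inv_cancel]
      have hm : (((u : QuaternionGroup 2 × K) * (v : QuaternionGroup 2 × K)⁻¹).1, (1 : K)) ∈ U := by
        have heq : ((u : QuaternionGroup 2 × K) * (v : QuaternionGroup 2 × K)⁻¹)
            = (((u : QuaternionGroup 2 × K) * (v : QuaternionGroup 2 × K)⁻¹).1, (1 : K)) := by
          exact Prod.ext rfl h2
        exact heq ▸ hmem
      have h1 := hker _ hm
      have hone : (u : QuaternionGroup 2 × K) * (v : QuaternionGroup 2 × K)⁻¹ = 1 :=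
        Prod.ext h1 h2
      exact Subtype.ext (mul_inv_eq_one.mp hone)
    have hsurj : Function.Surjective (fun u : U => (u : QuaternionGroup 2 × K).1) := by
      intro g
      obtain ⟨h, hU', -⟩ := hA g
      exact ⟨⟨(g, h), hU'⟩, rfl⟩
    have hle1 : Nat.card (QuaternionGroup 2) ≤ Nat.card U :=
      Nat.card_le_card_of_surjective _ hsurj
    have hle2 : Nat.card U ≤ Nat.card K := Nat.card_le_card_of_injective _ hinj
    rw [cardQ] at hle1
    have hKK : Nat.card K = Fintype.card K := Nat.card_eq_fintype_card
    omega
  have hBV : (((1 : K), (a 2 : QuaternionGroup 2))) ∈ V := by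
    by_contra hcon
    have hker : ∀ g : QuaternionGroup 2, ((1 : K), g) ∈ V → g = 1 := by
      intro g hg
      by_contra hne
      rcases hQ8 g hne with h | h
      · exact hcon (h ▸ hg)
      · have hsq := V.mul_mem hg hg
        have heq : (((1 : K), g) * (1, g)) = (((1 : K), (a 2 : QuaternionGroup 2))) := by
          simp [Prod.ext_iff, h]
        rw [heq] at hsq
        exact hcon hsq
    have hinj : Function.Injective (fun v : V => (v : K × QuaternionGroup 2).1) := by
      intro u v huv
      have huv' : (u : K × QuaternionGroup 2).1 = (v : K × QuaternionGroup 2).1 := huv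
      have hmem := V.mul_mem u.2 (V.inv_mem v.2)
      have h2 : ((u : K × QuaternionGroup 2) * (v : K × QuaternionGroup 2)⁻¹).1 = 1 := by
        simp only [Prod.fst_mul, Prod.fst_inv]
        rw [huv', mul_inv_cancel]
      have hm : ((1 : K), ((u : K × QuaternionGroup 2) * (v : K × QuaternionGroup 2)⁻¹).2) ∈ V := by
        have heq : ((u : K × QuaternionGroup 2) * (v : K × QuaternionGroup 2)⁻¹)
            = ((1 : K), ((u : K × QuaternionGroup 2) * (v : K × QuaternionGroup 2)⁻¹).2) :=
          Prod.ext h2 rfl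
        exact heq ▸ hmem
      have h1 := hker _ hm
      have hone : (u : K × QuaternionGroup 2) * (v : K × QuaternionGroup 2)⁻¹ = 1 :=
        Prod.ext h2 h1
      exact Subtype.ext (mul_inv_eq_one.mp hone)
    have hsurj : Function.Surjective (fun v : V => (v : K × QuaternionGroup 2).2) := by
      intro g
      obtain ⟨h, -, hV'⟩ := hA g
      exact ⟨⟨(h, g), hV'⟩, rfl⟩
    have hle1 : Nat.card (QuaternionGroup 2) ≤ Nat.card V :=
      Nat.card_le_card_of_surjective _ hsurj
    have hle2 : Nat.card V ≤ Nat.card K := Nat.card_le_card_of_injective _ hinj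
    rw [cardQ] at hle1
    have hKK : Nat.card K = Fintype.card K := Nat.card_eq_fintype_card
    omega
  -- Step C : μ (a 2, 1) = c ^ 2
  obtain ⟨h0, hU0, hV0⟩ := hA 1
  have hDq11 : ((1, 1) : QuaternionGroup 2 × QuaternionGroup 2) ∈ Dq := Dq.one_mem
  have e1 : μ ⟨(1, h0), hU0⟩ * ν ⟨(h0, 1), hV0⟩ = 1 := by
    rw [hcompat 1 1 h0 hU0 hV0 hDq11, hδ']
    simp
  have hUz : ((a 2 : QuaternionGroup 2), h0) ∈ U := by
    have hm := U.mul_mem hBU hU0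
    have heq : (((a 2 : QuaternionGroup 2), (1 : K)) * (1, h0)) = ((a 2 : QuaternionGroup 2), h0) := by
      simp [Prod.ext_iff]
    rwa [heq] at hm
  have hDz1 : ((a 2, 1) : QuaternionGroup 2 × QuaternionGroup 2) ∈ Dq := Or.inr (by simp)
  have e2 : μ ⟨(a 2, h0), hUz⟩ * ν ⟨(h0, 1), hV0⟩ = c ^ 2 := by
    rw [hcompat _ _ _ hUz hV0 hDz1, hδ']
    simp [hz1]
  have hsplit : (⟨(a 2, h0), hUz⟩ : U) = ⟨(a 2, 1), hBU⟩ * ⟨(1, h0), hU0⟩ := by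
    apply Subtype.ext
    simp [Prod.ext_iff]
  have eμz : μ ⟨(a 2, 1), hBU⟩ = c ^ 2 := by
    rw [hsplit, map_mul, mul_assoc, e1, mul_one] at e2
    exact e2
  -- Step D
  obtain ⟨hi, hUi, hVi⟩ := hA (a 1)
  obtain ⟨hj, hUj, hVj⟩ := hA (xa 0)
  set u : U := ⟨(a 1, hi), hUi⟩ with hu
  set v : U := ⟨(xa 0, hj), hUj⟩ with hv
  have hval : ((⁅u, v⁆ : U) : QuaternionGroup 2 × K) = ((a 2 : QuaternionGroup 2), ⁅hi, hj⁆) := by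
    show ((u * v * u⁻¹ * v⁻¹ : U) : QuaternionGroup 2 × K) = _
    rw [Subgroup.coe_mul, Subgroup.coe_mul, Subgroup.coe_inv, Subgroup.coe_inv, hu, hv]
    apply Prod.ext
    · show (a 1 : QuaternionGroup 2) * xa 0 * (a 1)⁻¹ * (xa 0)⁻¹ = a 2
      decide
    · rfl
  have hUzk : ((a 2 : QuaternionGroup 2), ⁅hi, hj⁆) ∈ U := hval ▸ (⁅u, v⁆ : U).2
  have eμcomm : μ ⟨(a 2, ⁅hi, hj⁆), hUzk⟩ = 1 := by
    have h1 : (⟨(a 2, ⁅hi, hj⁆), hUzk⟩ : U) = ⁅u, v⁆ := Subtype.ext hval.symm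
    rw [h1, map_commutatorElement]
    exact commutatorElement_eq_one_iff_commute.mpr (hcomm _ _)
  have hU1k : ((1 : QuaternionGroup 2), ⁅hi, hj⁆) ∈ U := by
    have hm := U.mul_mem (U.inv_mem hBU) hUzk
    have heq : (((a 2 : QuaternionGroup 2), (1 : K))⁻¹ * (a 2, ⁅hi, hj⁆))
        = (((1 : QuaternionGroup 2), ⁅hi, hj⁆)) := by
      simp [Prod.ext_iff]
    rwa [heq] at hm
  have hsp : (⟨(a 2, ⁅hi, hj⁆), hUzk⟩ : U) = ⟨(a 2, 1), hBU⟩ * ⟨(1, ⁅hi, hj⁆), hU1k⟩ := by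
    apply Subtype.ext
    simp [Prod.ext_iff]
  have eμ1k : μ ⟨(1, ⁅hi, hj⁆), hU1k⟩ = (c ^ 2)⁻¹ := by
    have h1 := eμcomm
    rw [hsp, map_mul, eμz] at h1
    exact (inv_eq_of_mul_eq_one_right h1).symm
  have hcn : ((c ^ 2)⁻¹) ^ orderOf (⁅hi, hj⁆ : K) = 1 := by
    rw [← eμ1k, ← map_pow]
    have hp : (⟨(1, ⁅hi, hj⁆), hU1k⟩ : U) ^ orderOf (⁅hi, hj⁆ : K) = 1 := by
      apply Subtype.ext
      rw [SubmonoidClass.coe_pow]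
      show (((1 : QuaternionGroup 2), (⁅hi, hj⁆ : K)) : QuaternionGroup 2 × K)
          ^ orderOf (⁅hi, hj⁆ : K) = 1
      rw [Prod.pow_mk, one_pow, pow_orderOf_eq_one]
      rfl
    rw [hp, map_one]
  have hc4 : c ^ 4 = 1 := hc ▸ pow_orderOf_eq_one c
  have hc2ne : c ^ 2 ≠ 1 := by
    intro h
    have := orderOf_dvd_of_pow_eq_one h
    rw [hc] at this
    omega
  have ho : orderOf ((c ^ 2)⁻¹) = 2 := by
    haveI : Fact (Nat.Prime 2) := ⟨by norm_num⟩
    rw [orderOf_inv]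
    refine orderOf_eq_prime ?_ hc2ne
    rw [← pow_mul]
    norm_num
    exact hc4
  have h2n : 2 ∣ orderOf (⁅hi, hj⁆ : K) := by
    have hdvd : orderOf ((c ^ 2)⁻¹) ∣ orderOf (⁅hi, hj⁆ : K) := orderOf_dvd_of_pow_eq_one hcn
    rwa [ho] at hdvd
  exact comm_odd hK hi hj h2n
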